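/- Let 𝔤 be a Lie superalgebra. The map Π': 𝔭 → 𝔤 defined on 𝔭 = ι'∘π'∘gr'∘T'^∞(𝔤) by Π'( Σ_{C(I)=i-1} d_I(X) + Σ_{C(J)=i} d_J(X) ) = (1/i!) X ∈ 𝔤_ī is a Lie superalgebra homomorphism, and Π'|_{𝔭_n}: 𝔭_n → 𝔤_{n̄} is a linear bijection for every n ≥ 0. Hence 𝔭 is a covering of 𝔤 along the quotient homomorphism ℤ → ℤ₂ with support ℤ_{≥0}. -/

import Mathlib

/-- A Lie superalgebra over `K`, presented by its even part `g0`, its odd part `g1`,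
and the four components of the bracket:
`b00 : [·,·] : 𝔤₀×𝔤₀ → 𝔤₀`, `b01 : 𝔤₀×𝔤₁ → 𝔤₁`, `b10 : 𝔤₁×𝔤₀ → 𝔤₁`, `b11 : 𝔤₁×𝔤₁ → 𝔤₀`.
The axioms are bilinearity, super skew-symmetry `[x,y] = -(-1)^{|x||y|}[y,x]`, and the
super Jacobi identity `[x,[y,z]] - (-1)^{|x||y|}[y,[x,z]] = [[x,y],z]`, written out in
all homogeneous components. -/
structure IsLieSuperAlg (K : Type*) [Field K]
    {g0 g1 : Type*} [AddCommGroup g0] [Module K g0] [AddCommGroup g1] [Module K g1]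
    (b00 : g0 → g0 → g0) (b01 : g0 → g1 → g1)
    (b10 : g1 → g0 → g1) (b11 : g1 → g1 → g0) : Prop where
  b00_addl : ∀ x x' y, b00 (x + x') y = b00 x y + b00 x' y
  b00_smull : ∀ (c : K) x y, b00 (c • x) y = c • b00 x y
  b00_addr : ∀ x y y', b00 x (y + y') = b00 x y + b00 x y'
  b00_smulr : ∀ (c : K) x y, b00 x (c • y) = c • b00 x y
  b01_addl : ∀ x x' y, b01 (x + x') y = b01 x y + b01 x' y
  b01_smull : ∀ (c : K) x y, b01 (c • x) y = c • b01 x y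
  b01_addr : ∀ x y y', b01 x (y + y') = b01 x y + b01 x y'
  b01_smulr : ∀ (c : K) x y, b01 x (c • y) = c • b01 x y
  b10_addl : ∀ x x' y, b10 (x + x') y = b10 x y + b10 x' y
  b10_smull : ∀ (c : K) x y, b10 (c • x) y = c • b10 x y
  b10_addr : ∀ x y y', b10 x (y + y') = b10 x y + b10 x y'
  b10_smulr : ∀ (c : K) x y, b10 x (c • y) = c • b10 x y
  b11_addl : ∀ x x' y, b11 (x + x') y = b11 x y + b11 x' y
  b11_smull : ∀ (c : K) x y, b11 (c • x) y = c • b11 x y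
  b11_addr : ∀ x y y', b11 x (y + y') = b11 x y + b11 x y'
  b11_smulr : ∀ (c : K) x y, b11 x (c • y) = c • b11 x y
  skew00 : ∀ x y, b00 x y = - b00 y x
  skew01 : ∀ x y, b01 x y = - b10 y x
  skew11 : ∀ x y, b11 x y = b11 y x
  jac000 : ∀ x y z, b00 x (b00 y z) - b00 y (b00 x z) = b00 (b00 x y) z
  jac001 : ∀ x y z, b01 x (b01 y z) - b01 y (b01 x z) = b01 (b00 x y) z
  jac010 : ∀ x y z, b01 x (b10 y z) - b10 y (b00 x z) = b10 (b01 x y) z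
  jac011 : ∀ x y z, b00 x (b11 y z) - b11 y (b01 x z) = b11 (b01 x y) z
  jac100 : ∀ x y z, b10 x (b00 y z) - b01 y (b10 x z) = b10 (b10 x y) z
  jac101 : ∀ x y z, b11 x (b01 y z) - b00 y (b11 x z) = b11 (b10 x y) z
  jac110 : ∀ x y z, b11 x (b10 y z) + b11 y (b10 x z) = b00 (b11 x y) z
  jac111 : ∀ x y z, b10 x (b11 y z) + b10 y (b11 x z) = b01 (b11 x y) z

namespace Stmt15

variable {K : Type*} [Field K] [CharZero K]
variable {g0 g1 : Type*} [AddCommGroup g0] [Module K g0] [AddCommGroup g1] [Module K g1]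
variable (b00 : g0 → g0 → g0) (b01 : g0 → g1 → g1) (b10 : g1 → g0 → g1) (b11 : g1 → g1 → g0)

lemma sum_powerset_card {M : Type*} [AddCommMonoid M] (n i : ℕ) (g : Finset ℕ → M) (c : M)
    (h0 : ∀ I ∈ (Finset.range n).powerset, I.card ≠ i → g I = 0)
    (hc : ∀ I ∈ (Finset.range n).powerset, I.card = i → g I = c) :
    ∑ I ∈ (Finset.range n).powerset, g I = (n.choose i) • c := by
  rw [Finset.sum_congr rfl (g := fun I => if I.card = i then c else (0:M))
      (fun I hI => by
        by_cases hcard : I.card = i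
        · simp [hcard, hc I hI hcard]
        · simp [hcard, h0 I hI hcard])]
  rw [← Finset.sum_filter, ← Finset.powersetCard_eq_filter, Finset.sum_const,
    Finset.card_powersetCard, Finset.card_range]

lemma fact_inv (i j : ℕ) :
    (((i+j).factorial : K))⁻¹ * ((i+j).choose i : K)
      = ((i.factorial : K))⁻¹ * ((j.factorial : K))⁻¹ := by
  have h := Nat.choose_mul_factorial_mul_factorial (Nat.le_add_right i j)
  rw [Nat.add_sub_cancel_left] at h
  have h2 : ((i+j).choose i : K) * (i.factorial : K) * (j.factorial : K)
      = ((i+j).factorial : K) := by exact_mod_cast congrArg (Nat.cast (R := K)) h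
  have hi : (i.factorial : K) ≠ 0 := Nat.cast_ne_zero.mpr i.factorial_ne_zero
  have hj : (j.factorial : K) ≠ 0 := Nat.cast_ne_zero.mpr j.factorial_ne_zero
  have hc : ((i+j).choose i : K) ≠ 0 :=
    Nat.cast_ne_zero.mpr (Nat.choose_pos (Nat.le_add_right i j)).ne'
  rw [← h2]
  field_simp



/-- Bracket component of `𝔥 = π'(gr'(T'^∞(𝔤)))` pairing `d_I(𝔤)` with `d_J(𝔤)`. -/
def hComp (I J : Finset ℕ) : (g0 × g1) → (g0 × g1) → (g0 × g1) :=
  fun v w =>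
    ((if I.card % 2 = 1 ∧ J.card % 2 = 1 then 0 else b00 v.1 w.1) +
       (if I.card % 2 = 0 ∧ J.card % 2 = 0 then 0 else b11 v.2 w.2),
     (if I.card % 2 = 1 ∧ J.card % 2 = 0 then 0 else b01 v.1 w.2) +
       (if I.card % 2 = 0 ∧ J.card % 2 = 1 then 0 else b10 v.2 w.1))

/-- The bracket of `𝔥`. -/
def hBr : (∀ _ : Finset ℕ, g0 × g1) → (∀ _ : Finset ℕ, g0 × g1) →
    (∀ _ : Finset ℕ, g0 × g1) :=
  fun f g S => ∑ I ∈ S.powerset, hComp b00 b01 b10 b11 I (S \ I) (f I) (g (S \ I))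

/-- For even `n`, `X ∈ 𝔤₀`: the diagonal element `Σ_{#I=n-1} d_I(X) + Σ_{#J=n} d_J(X) ∈ 𝔭_n`. -/
def eltE (n : ℕ) (X : g0) : ∀ _ : Finset ℕ, g0 × g1 :=
  fun I => (if I.card = n ∨ I.card + 1 = n then X else 0, 0)

/-- For odd `n`, `X ∈ 𝔤₁`: the diagonal element of `𝔭_n`. -/
def eltO (n : ℕ) (X : g1) : ∀ _ : Finset ℕ, g0 × g1 :=
  fun I => (0, if I.card = n ∨ I.card + 1 = n then X else 0)

/-- The covering map `Π'` on `𝔭_n` for `n` even: `Π'(Σ d_I(X) + Σ d_J(X)) = (1/n!) X`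
(the value `X` is read off from any slot of cardinality `n`). -/
noncomputable def prjE (n : ℕ) (f : ∀ _ : Finset ℕ, g0 × g1) : g0 :=
  ((n.factorial : K))⁻¹ • (f (Finset.range n)).1

/-- The covering map `Π'` on `𝔭_n` for `n` odd. -/
noncomputable def prjO (n : ℕ) (f : ∀ _ : Finset ℕ, g0 × g1) : g1 :=
  ((n.factorial : K))⁻¹ • (f (Finset.range n)).2

/-- The map `Π' : 𝔭 → 𝔤`, `Π'(Σ_{#I=i-1} d_I(X) + Σ_{#J=i} d_J(X)) = (1/i!) X`,
is a Lie superalgebra homomorphism on the diagonal subalgebra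
`𝔭 = ι'∘π'∘gr'∘T'^∞(𝔤)`, and `Π'|_{𝔭_n} : 𝔭_n → 𝔤_{n̄}` is a linear bijection for every
`n ≥ 0`.  Hence `𝔭` is a covering of `𝔤` along `ℤ → ℤ₂` with support `ℤ≥0`. -/
theorem diag_is_covering (h : IsLieSuperAlg K b00 b01 b10 b11) :
    (∀ i j : ℕ, i % 2 = 0 → j % 2 = 0 → ∀ (X Y : g0),
      prjE (K := K) (g0 := g0) (g1 := g1) (i + j) (hBr b00 b01 b10 b11 (eltE i X) (eltE j Y)) =
        b00 (prjE (K := K) (g0 := g0) (g1 := g1) i (eltE i X)) (prjE (K := K) (g0 := g0) (g1 := g1) j (eltE j Y))) ∧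
    (∀ i j : ℕ, i % 2 = 0 → j % 2 = 1 → ∀ (X : g0) (Y : g1),
      prjO (K := K) (g0 := g0) (g1 := g1) (i + j) (hBr b00 b01 b10 b11 (eltE i X) (eltO j Y)) =
        b01 (prjE (K := K) (g0 := g0) (g1 := g1) i (eltE i X)) (prjO (K := K) (g0 := g0) (g1 := g1) j (eltO j Y))) ∧
    (∀ i j : ℕ, i % 2 = 1 → j % 2 = 0 → ∀ (X : g1) (Y : g0),
      prjO (K := K) (g0 := g0) (g1 := g1) (i + j) (hBr b00 b01 b10 b11 (eltO i X) (eltE j Y)) =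
        b10 (prjO (K := K) (g0 := g0) (g1 := g1) i (eltO i X)) (prjE (K := K) (g0 := g0) (g1 := g1) j (eltE j Y))) ∧
    (∀ i j : ℕ, i % 2 = 1 → j % 2 = 1 → ∀ (X Y : g1),
      prjE (K := K) (g0 := g0) (g1 := g1) (i + j) (hBr b00 b01 b10 b11 (eltO i X) (eltO j Y)) =
        b11 (prjO (K := K) (g0 := g0) (g1 := g1) i (eltO i X)) (prjO (K := K) (g0 := g0) (g1 := g1) j (eltO j Y))) ∧
    (∀ n : ℕ, n % 2 = 0 →
      Function.Bijective
        (fun f : {f : ∀ _ : Finset ℕ, g0 × g1 // ∃ X : g0, f = eltE n X} =>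
          prjE (K := K) (g0 := g0) (g1 := g1) n f.1)) ∧
    (∀ n : ℕ, n % 2 = 1 →
      Function.Bijective
        (fun f : {f : ∀ _ : Finset ℕ, g0 × g1 // ∃ X : g1, f = eltO n X} =>
          prjO (K := K) (g0 := g0) (g1 := g1) n f.1)) := by

  have z00l : ∀ y, b00 0 y = 0 := fun y => by simpa using h.b00_smull 0 0 y
  have z00r : ∀ x, b00 x 0 = 0 := fun x => by simpa using h.b00_smulr 0 x 0
  have z01l : ∀ y, b01 0 y = 0 := fun y => by simpa using h.b01_smull 0 0 y
  have z01r : ∀ x, b01 x 0 = 0 := fun x => by simpa using h.b01_smulr 0 x 0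
  have z10l : ∀ y, b10 0 y = 0 := fun y => by simpa using h.b10_smull 0 0 y
  have z10r : ∀ x, b10 x 0 = 0 := fun x => by simpa using h.b10_smulr 0 x 0
  have z11l : ∀ y, b11 0 y = 0 := fun y => by simpa using h.b11_smull 0 0 y
  have z11r : ∀ x, b11 x 0 = 0 := fun x => by simpa using h.b11_smulr 0 x 0
  have zE : ∀ (m : ℕ) (X : g0), prjE (K := K) (g0 := g0) (g1 := g1) m (eltE m X)
      = ((m.factorial : K))⁻¹ • X := fun m X => by simp [prjE, eltE, Finset.card_range]
  have zO : ∀ (m : ℕ) (X : g1), prjO (K := K) (g0 := g0) (g1 := g1) m (eltO m X)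
      = ((m.factorial : K))⁻¹ • X := fun m X => by simp [prjO, eltO, Finset.card_range]
  refine ⟨?_, ?_, ?_, ?_, ?_, ?_⟩
  · intro i j hi hj X Y
    have key : (hBr b00 b01 b10 b11 (eltE i X) (eltE j Y) (Finset.range (i+j))).1 
        = ((i+j).choose i) • b00 X Y := by
      simp only [hBr]
      rw [Prod.fst_sum]
      refine sum_powerset_card (i+j) i _ _ ?_ ?_
      · intro I hI hne
        have h1 : ((Finset.range (i+j)) \ I).card = i + j - I.card := by
          rw [Finset.card_sdiff_of_subset (Finset.mem_powerset.mp hI), Finset.card_range]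
        have h2 : I.card ≤ i + j := by
          simpa using Finset.card_le_card (Finset.mem_powerset.mp hI)
        have hP : ¬ (I.card = i ∨ I.card + 1 = i)
            ∨ ¬ (i + j - I.card = j ∨ (i + j - I.card) + 1 = j) := by omega
        simp only [hComp, eltE, eltO]
        rw [h1]
        rcases hP with hP | hP <;> simp [hP, z00l, z00r, z11l, z11r]
      · intro I hI hcard
        have h1 : ((Finset.range (i+j)) \ I).card = i + j - I.card := by
          rw [Finset.card_sdiff_of_subset (Finset.mem_powerset.mp hI), Finset.card_range]
        have hJ : i + j - I.card = j := by omega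
        simp only [hComp, eltE, eltO]
        rw [h1, hJ, hcard]
        simp [hi, hj, z00l, z00r, z11l, z11r]
    rw [zE i X, zE j Y, h.b00_smull, h.b00_smulr, smul_smul]
    simp only [prjE]
    rw [key, ← Nat.cast_smul_eq_nsmul K, smul_smul, fact_inv]
  · intro i j hi hj X Y
    have key : (hBr b00 b01 b10 b11 (eltE i X) (eltO j Y) (Finset.range (i+j))).2 
        = ((i+j).choose i) • b01 X Y := by
      simp only [hBr]
      rw [Prod.snd_sum]
      refine sum_powerset_card (i+j) i _ _ ?_ ?_
      · intro I hI hne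
        have h1 : ((Finset.range (i+j)) \ I).card = i + j - I.card := by
          rw [Finset.card_sdiff_of_subset (Finset.mem_powerset.mp hI), Finset.card_range]
        have h2 : I.card ≤ i + j := by
          simpa using Finset.card_le_card (Finset.mem_powerset.mp hI)
        have hP : ¬ (I.card = i ∨ I.card + 1 = i)
            ∨ ¬ (i + j - I.card = j ∨ (i + j - I.card) + 1 = j) := by omega
        simp only [hComp, eltE, eltO]
        rw [h1]
        rcases hP with hP | hP <;> simp [hP, z01l, z01r, z10l, z10r]
      · intro I hI hcard
        have h1 : ((Finset.range (i+j)) \ I).card = i + j - I.card := by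
          rw [Finset.card_sdiff_of_subset (Finset.mem_powerset.mp hI), Finset.card_range]
        have hJ : i + j - I.card = j := by omega
        simp only [hComp, eltE, eltO]
        rw [h1, hJ, hcard]
        simp [hi, hj, z01l, z01r, z10l, z10r]
    rw [zE i X, zO j Y, h.b01_smull, h.b01_smulr, smul_smul]
    simp only [prjO]
    rw [key, ← Nat.cast_smul_eq_nsmul K, smul_smul, fact_inv]
  · intro i j hi hj X Y
    have key : (hBr b00 b01 b10 b11 (eltO i X) (eltE j Y) (Finset.range (i+j))).2 
        = ((i+j).choose i) • b10 X Y := by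
      simp only [hBr]
      rw [Prod.snd_sum]
      refine sum_powerset_card (i+j) i _ _ ?_ ?_
      · intro I hI hne
        have h1 : ((Finset.range (i+j)) \ I).card = i + j - I.card := by
          rw [Finset.card_sdiff_of_subset (Finset.mem_powerset.mp hI), Finset.card_range]
        have h2 : I.card ≤ i + j := by
          simpa using Finset.card_le_card (Finset.mem_powerset.mp hI)
        have hP : ¬ (I.card = i ∨ I.card + 1 = i)
            ∨ ¬ (i + j - I.card = j ∨ (i + j - I.card) + 1 = j) := by omega
        simp only [hComp, eltE, eltO]
        rw [h1]
        rcases hP with hP | hP <;> simp [hP, z10l, z10r, z01l, z01r]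
      · intro I hI hcard
        have h1 : ((Finset.range (i+j)) \ I).card = i + j - I.card := by
          rw [Finset.card_sdiff_of_subset (Finset.mem_powerset.mp hI), Finset.card_range]
        have hJ : i + j - I.card = j := by omega
        simp only [hComp, eltE, eltO]
        rw [h1, hJ, hcard]
        simp [hi, hj, z10l, z10r, z01l, z01r]
    rw [zO i X, zE j Y, h.b10_smull, h.b10_smulr, smul_smul]
    simp only [prjO]
    rw [key, ← Nat.cast_smul_eq_nsmul K, smul_smul, fact_inv]
  · intro i j hi hj X Y
    have key : (hBr b00 b01 b10 b11 (eltO i X) (eltO j Y) (Finset.range (i+j))).1 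
        = ((i+j).choose i) • b11 X Y := by
      simp only [hBr]
      rw [Prod.fst_sum]
      refine sum_powerset_card (i+j) i _ _ ?_ ?_
      · intro I hI hne
        have h1 : ((Finset.range (i+j)) \ I).card = i + j - I.card := by
          rw [Finset.card_sdiff_of_subset (Finset.mem_powerset.mp hI), Finset.card_range]
        have h2 : I.card ≤ i + j := by
          simpa using Finset.card_le_card (Finset.mem_powerset.mp hI)
        have hP : ¬ (I.card = i ∨ I.card + 1 = i)
            ∨ ¬ (i + j - I.card = j ∨ (i + j - I.card) + 1 = j) := by omega
        simp only [hComp, eltE, eltO]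
        rw [h1]
        rcases hP with hP | hP <;> simp [hP, z11l, z11r, z00l, z00r]
      · intro I hI hcard
        have h1 : ((Finset.range (i+j)) \ I).card = i + j - I.card := by
          rw [Finset.card_sdiff_of_subset (Finset.mem_powerset.mp hI), Finset.card_range]
        have hJ : i + j - I.card = j := by omega
        simp only [hComp, eltE, eltO]
        rw [h1, hJ, hcard]
        simp [hi, hj, z11l, z11r, z00l, z00r]
    rw [zO i X, zO j Y, h.b11_smull, h.b11_smulr, smul_smul]
    simp only [prjE]
    rw [key, ← Nat.cast_smul_eq_nsmul K, smul_smul, fact_inv]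
  · intro n _
    constructor
    · rintro ⟨f, X, rfl⟩ ⟨g, X', rfl⟩ hfg
      simp only [zE] at hfg
      have hne : ((n.factorial : K)) ≠ 0 := Nat.cast_ne_zero.mpr n.factorial_ne_zero
      have hX : X = X' := by
        have := congrArg (fun v => (n.factorial : K) • v) hfg
        simpa [smul_smul, mul_inv_cancel₀ hne] using this
      exact Subtype.ext (by rw [hX])
    · intro Y
      have hne : ((n.factorial : K)) ≠ 0 := Nat.cast_ne_zero.mpr n.factorial_ne_zero
      refine ⟨⟨eltE n ((n.factorial : K) • Y), ⟨_, rfl⟩⟩, ?_⟩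
      simp [zE, smul_smul, inv_mul_cancel₀ hne]
  · intro n _
    constructor
    · rintro ⟨f, X, rfl⟩ ⟨g, X', rfl⟩ hfg
      simp only [zO] at hfg
      have hne : ((n.factorial : K)) ≠ 0 := Nat.cast_ne_zero.mpr n.factorial_ne_zero
      have hX : X = X' := by
        have := congrArg (fun v => (n.factorial : K) • v) hfg
        simpa [smul_smul, mul_inv_cancel₀ hne] using this
      exact Subtype.ext (by rw [hX])
    · intro Y
      have hne : ((n.factorial : K)) ≠ 0 := Nat.cast_ne_zero.mpr n.factorial_ne_zero
      refine ⟨⟨eltO n ((n.factorial : K) • Y), ⟨_, rfl⟩⟩, ?_⟩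
      simp [zO, smul_smul, inv_mul_cancel₀ hne]


end Stmt15
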